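/- arXiv:1601.06633 — 4 statements merged into one kernel-verified Lean document; each statement's English description precedes it below -/
import Mathlib

section
/- The trace form on a Clifford algebra is a symmetric trace: for the linear functional tr: C(q) → k defined on a free quadratic form with orthogonal basis by tr(a·e^0) = a and tr(e^Δ) = 0 for Δ ≠ 0, one has tr(uv) = tr(vu) for all u, v ∈ C(q). -/
open CliffordAlgebra

section Aux
variable {R M : Type*} [CommRing R] [AddCommGroup M] [Module R M]
  {n : ℕ} {Q : QuadraticForm R M} {b : Fin n → M}

noncomputable def gprod (Q : QuadraticForm R M) (b : Fin n → M) (l : List (Fin n))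
    (Δ : Fin n → Bool) : CliffordAlgebra Q :=
  (l.map (fun i => if Δ i then ι Q (b i) else 1)).prod

lemma gprod_nil (Δ : Fin n → Bool) : gprod Q b [] Δ = 1 := rfl

lemma gprod_cons (j : Fin n) (l : List (Fin n)) (Δ : Fin n → Bool) :
    gprod Q b (j :: l) Δ = (if Δ j then ι Q (b j) else 1) * gprod Q b l Δ := by
  simp [gprod]

lemma anticomm (hortho : ∀ i j : Fin n, i ≠ j → Q.IsOrtho (b i) (b j))
    {i j : Fin n} (h : i ≠ j) :
    ι Q (b i) * ι Q (b j) = - (ι Q (b j) * ι Q (b i)) := by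
  have h1 := CliffordAlgebra.ι_mul_ι_add_swap (Q := Q) (b i) (b j)
  have h2 : QuadraticMap.polar Q (b i) (b j) = 0 :=
    (hortho i j h).polar_eq_zero
  rw [h2, map_zero] at h1
  exact eq_neg_of_add_eq_zero_left h1

lemma swapA (hortho : ∀ i j : Fin n, i ≠ j → Q.IsOrtho (b i) (b j))
    (l : List (Fin n)) (Δ : Fin n → Bool) (i : Fin n) (hi : i ∉ l) :
    ∃ c : R, gprod Q b l Δ * ι Q (b i) = c • (ι Q (b i) * gprod Q b l Δ) := by
  induction l with
  | nil => exact ⟨1, by simp [gprod_nil]⟩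
  | cons j t ih =>
    have hj : i ≠ j := fun h => hi (h ▸ List.mem_cons_self (a := j) (l := t))
    have hit : i ∉ t := fun h => hi (List.mem_cons_of_mem _ h)
    obtain ⟨c, hc⟩ := ih hit
    by_cases hΔ : Δ j
    · refine ⟨-c, ?_⟩
      rw [gprod_cons, if_pos hΔ, mul_assoc, hc, mul_smul_comm, ← mul_assoc,
        anticomm hortho (Ne.symm hj), neg_mul, smul_neg, neg_smul]
      simp [mul_assoc]
    · exact ⟨c, by simp [gprod_cons, hΔ, hc]⟩

lemma main_lemma (hortho : ∀ i j : Fin n, i ≠ j → Q.IsOrtho (b i) (b j))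
    (l : List (Fin n)) (hl : l.Nodup) (Δ Γ : Fin n → Bool) :
    ∃ c : R, gprod Q b l Δ * gprod Q b l Γ
      = c • gprod Q b l (fun i => xor (Δ i) (Γ i)) := by
  induction l with
  | nil => exact ⟨1, by simp [gprod_nil]⟩
  | cons j t ih =>
    rw [List.nodup_cons] at hl
    obtain ⟨hjt, ht⟩ := hl
    obtain ⟨c₂, hc₂⟩ := ih ht
    have hswap : ∃ c₁ : R, gprod Q b t Δ * (if Γ j then ι Q (b j) else 1)
        = c₁ • ((if Γ j then ι Q (b j) else 1) * gprod Q b t Δ) := by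
      by_cases hΓ : Γ j
      · simpa [hΓ] using swapA hortho t Δ j hjt
      · exact ⟨1, by simp [hΓ]⟩
    obtain ⟨c₁, hc₁⟩ := hswap
    have hxy : ∃ d : R, (if Δ j then ι Q (b j) else 1) * (if Γ j then ι Q (b j) else 1)
        = d • (if xor (Δ j) (Γ j) then ι Q (b j) else 1) := by
      cases hΔ : Δ j <;> cases hΓ : Γ j <;> simp only [hΔ, hΓ, if_true, if_false,
        Bool.xor_false, Bool.xor_true, Bool.false_xor, Bool.true_xor, Bool.not_true,
        Bool.not_false, one_mul, mul_one]
      · exact ⟨1, by simp⟩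
      · exact ⟨1, by simp⟩
      · exact ⟨1, by simp⟩
      · exact ⟨Q (b j), by simp [ι_sq_scalar, Algebra.algebraMap_eq_smul_one]⟩
    obtain ⟨d, hd⟩ := hxy
    refine ⟨c₁ * c₂ * d, ?_⟩
    rw [gprod_cons, gprod_cons, gprod_cons]
    set x := (if Δ j then ι Q (b j) else 1) with hx
    set y := (if Γ j then ι Q (b j) else 1) with hy
    set z := (if xor (Δ j) (Γ j) then ι Q (b j) else 1) with hz
    set gΔ := gprod Q b t Δ
    set gΓ := gprod Q b t Γ
    set gX := gprod Q b t (fun i => xor (Δ i) (Γ i))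
    calc x * gΔ * (y * gΓ) = x * (gΔ * y) * gΓ := by
          rw [mul_assoc x gΔ, ← mul_assoc gΔ y gΓ, ← mul_assoc x]
      _ = x * (c₁ • (y * gΔ)) * gΓ := by rw [hc₁]
      _ = c₁ • (x * y * (gΔ * gΓ)) := by
          rw [mul_smul_comm, smul_mul_assoc]
          congr 1
          simp [mul_assoc]
      _ = c₁ • (x * y * (c₂ • gX)) := by rw [hc₂]
      _ = c₁ • ((d • z) * (c₂ • gX)) := by rw [hd]
      _ = (c₁ * c₂ * d) • (z * gX) := by
          rw [smul_mul_assoc, mul_smul_comm, smul_smul, smul_smul]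
          congr 1
          ring

end Aux

/-- The trace form on a Clifford algebra is a symmetric trace: for the linear functional
`tr : C(q) → k`, defined on a free quadratic form with orthogonal basis by picking out the
coefficient of `e^0 = 1` with respect to the basis `{e^Δ}`, one has `tr (u * v) = tr (v * u)`
for all `u, v ∈ C(q)`. -/
theorem stmt_2 {R M : Type*} [CommRing R] [AddCommGroup M] [Module R M]
    (n : ℕ) (Q : QuadraticForm R M) (b : Module.Basis (Fin n) R M)
    (hortho : ∀ i j : Fin n, i ≠ j → Q.IsOrtho (b i) (b j))
    (B : Module.Basis (Fin n → Bool) R (CliffordAlgebra Q))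
    (hB : ∀ Δ : Fin n → Bool,
      B Δ = ((List.finRange n).map
        (fun i => if Δ i then CliffordAlgebra.ι Q (b i) else 1)).prod) :
    ∀ u v : CliffordAlgebra Q,
      B.repr (u * v) (fun _ => false) = B.repr (v * u) (fun _ => false) := by
  have hBg : ∀ Δ, B Δ = gprod Q (⇑b) (List.finRange n) Δ := fun Δ => hB Δ
  have key : ∀ Δ Γ : Fin n → Bool, Δ ≠ Γ →
      B.repr (B Δ * B Γ) (fun _ => false) = 0 := by
    intro Δ Γ hne
    obtain ⟨c, hc⟩ := main_lemma hortho (List.finRange n) (List.nodup_finRange n) Δ Γ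
    rw [hBg, hBg, hc, ← hBg, map_smul]
    have hx : (fun i => xor (Δ i) (Γ i)) ≠ (fun _ => false) := by
      intro h
      apply hne
      funext i
      have := congrFun h i
      cases hΔ : Δ i <;> cases hΓ : Γ i <;> simp_all
    simp [Finsupp.single_apply, hx]
  suffices h : ∀ Δ Γ : Fin n → Bool,
      B.repr (B Δ * B Γ) (fun _ => false) = B.repr (B Γ * B Δ) (fun _ => false) by
    intro u v
    rw [← B.linearCombination_repr u, ← B.linearCombination_repr v,
      Finsupp.linearCombination_apply, Finsupp.linearCombination_apply, Finsupp.sum, Finsupp.sum,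
      Finset.sum_mul_sum, Finset.sum_mul_sum]
    simp only [map_sum, Finsupp.coe_finset_sum, Finset.sum_apply]
    rw [Finset.sum_comm]
    refine Finset.sum_congr rfl fun Δ _ => Finset.sum_congr rfl fun Γ _ => ?_
    rw [smul_mul_smul_comm, smul_mul_smul_comm, map_smul, map_smul]
    simp only [Finsupp.smul_apply, smul_eq_mul]
    rw [h Δ Γ]
    ring
  intro Δ Γ
  by_cases h : Δ = Γ
  · subst h; rfl
  · rw [key Δ Γ h, key Γ Δ (Ne.symm h)]
end

section
/- The bilinear form B(x,y) = tr(σ(x)·y) on the Clifford algebra C(q), where σ is the canonical involution and tr the trace form, is symmetric and non-degenerate, provided 1/2 ∈ k and (P,q) is non-degenerate. -/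
open CliffordAlgebra
open Module

section aux
variable {R M : Type*} [CommRing R] [AddCommGroup M] [Module R M]
variable {Q : QuadraticForm R M}

/-- product of pointwise-smul list -/
lemma aux_smul_list_prod {ι : Type*} (l : List ι) (u : ι → R) (v : ι → CliffordAlgebra Q) :
    (l.map fun i => u i • v i).prod = (l.map u).prod • (l.map v).prod := by
  induction l with
  | nil => simp
  | cons a t ih =>
      simp only [List.map_cons, List.prod_cons, ih]
      rw [smul_mul_assoc, mul_smul_comm, smul_smul, mul_comm]

/-- telescoping -/
lemma aux_telescope {n : ℕ} (b : Fin n → M) (Δ : Fin n → Bool) (l : List (Fin n)) :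
    (l.reverse.map fun i => if Δ i then ι Q (b i) else 1).prod *
      (l.map fun i => if Δ i then ι Q (b i) else 1).prod =
    algebraMap R _ (l.map fun i => if Δ i then Q (b i) else 1).prod := by
  induction l with
  | nil => simp
  | cons a t ih =>
      simp only [List.reverse_cons, List.map_append, List.prod_append, List.map_cons,
        List.prod_cons, List.map_nil, List.prod_nil, mul_one]
      have h1 : (if Δ a then ι Q (b a) else 1) * (if Δ a then ι Q (b a) else 1) =
          algebraMap R (CliffordAlgebra Q) (if Δ a then Q (b a) else 1) := by
        split <;> simp [ι_sq_scalar]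
      calc (t.reverse.map fun i => if Δ i then ι Q (b i) else 1).prod *
            (if Δ a then ι Q (b a) else 1) *
            ((if Δ a then ι Q (b a) else 1) * (t.map fun i => if Δ i then ι Q (b i) else 1).prod)
          = (t.reverse.map fun i => if Δ i then ι Q (b i) else 1).prod *
            algebraMap R _ (if Δ a then Q (b a) else 1) *
            (t.map fun i => if Δ i then ι Q (b i) else 1).prod := by
            rw [mul_assoc, mul_assoc, ← mul_assoc (if Δ a then ι Q (b a) else 1), h1]
        _ = algebraMap R _ (if Δ a then Q (b a) else 1) *
            ((t.reverse.map fun i => if Δ i then ι Q (b i) else 1).prod *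
             (t.map fun i => if Δ i then ι Q (b i) else 1).prod) := by
            rw [← Algebra.commutes, mul_assoc]
        _ = _ := by rw [ih, ← map_mul]

lemma aux_rev_prod {n : ℕ} (b : Fin n → M) (Δ : Fin n → Bool) (l : List (Fin n)) :
    reverse ((l.map fun i => if Δ i then ι Q (b i) else 1).prod) =
      (l.reverse.map fun i => if Δ i then ι Q (b i) else 1).prod := by
  induction l with
  | nil => simp
  | cons a t ih =>
      simp only [List.map_cons, List.prod_cons, reverse.map_mul, ih, List.reverse_cons,
        List.map_append, List.prod_append, List.map_nil, List.prod_nil, mul_one,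
        List.map_cons, List.prod_cons]
      congr 1
      split <;> simp

end aux


section aux2
variable {R M : Type*} [CommRing R] [AddCommGroup M] [Module R M]
variable {Q : QuadraticForm R M} {n : ℕ}

lemma aux_polar_basis (b : Basis (Fin n) R M)
    (hortho : ∀ i j : Fin n, i ≠ j → Q.IsOrtho (b i) (b j)) (m : M) (i : Fin n) :
    QuadraticMap.polar Q m (b i) = b.repr m i * (2 * Q (b i)) := by
  conv_lhs => rw [← b.sum_repr m]
  rw [← QuadraticMap.polarBilin_apply_apply, map_sum]
  simp only [map_smul, LinearMap.sum_apply, LinearMap.smul_apply,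
    QuadraticMap.polarBilin_apply_apply, smul_eq_mul]
  rw [Finset.sum_eq_single i]
  · simp [QuadraticMap.polar_self, two_smul, two_mul, mul_add]
  · intro j _ hj
    simp [QuadraticMap.IsOrtho.polar_eq_zero (hortho j i hj)]
  · simp

lemma aux_Qb_unit (b : Basis (Fin n) R M)
    (hortho : ∀ i j : Fin n, i ≠ j → Q.IsOrtho (b i) (b j))
    (hnd : Function.Bijective (QuadraticMap.polarBilin Q)) (i : Fin n) :
    IsUnit (Q (b i)) := by
  obtain ⟨m, hm⟩ := hnd.2 (b.coord i)
  have h1 : QuadraticMap.polar Q m (b i) = 1 := by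
    have := congrArg (fun f => f (b i)) hm
    simpa using this
  rw [aux_polar_basis b hortho] at h1
  exact IsUnit.of_mul_eq_one (b.repr m i * 2) (by linear_combination h1)

/-- the sign isometry -/
noncomputable def auxPhi (b : Basis (Fin n) R M)
    (hortho : ∀ i j : Fin n, i ≠ j → Q.IsOrtho (b i) (b j)) (i : Fin n) :
    Q →qᵢ Q where
  toLinearMap := LinearMap.id - (LinearMap.toSpanSingleton R M ((2 : R) • b i)) ∘ₗ (b.coord i)
  map_app' := by
    intro m
    show Q (m - (b.repr m i) • ((2 : R) • b i)) = Q m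
    have key : ∀ w : M, Q (m + w) = Q m + Q w + QuadraticMap.polar Q m w := by
      intro w; rw [QuadraticMap.polar]; ring
    rw [sub_eq_add_neg, key, QuadraticMap.map_neg, QuadraticMap.map_smul, QuadraticMap.map_smul,
      QuadraticMap.polar_neg_right, QuadraticMap.polar_smul_right, QuadraticMap.polar_smul_right,
      aux_polar_basis b hortho]
    simp only [smul_eq_mul]
    ring

lemma auxPhi_apply_b (b : Basis (Fin n) R M)
    (hortho : ∀ i j : Fin n, i ≠ j → Q.IsOrtho (b i) (b j)) (i j : Fin n) :
    auxPhi b hortho i (b j) = if j = i then -b i else b j := by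
  show b j - (b.coord i (b j)) • ((2 : R) • b i) = _
  rcases eq_or_ne j i with rfl | h
  · simp only [Basis.coord_apply, Basis.repr_self_apply, if_pos rfl, eq_self_iff_true, if_true]
    module
  · simp [Basis.coord_apply, Basis.repr_self_apply, h]

end aux2


section aux3
variable {R M : Type*} [CommRing R] [AddCommGroup M] [Module R M]
variable {Q : QuadraticForm R M} {n : ℕ}

open CliffordAlgebra

lemma aux_sign (b : Basis (Fin n) R M)
    (hortho : ∀ i j : Fin n, i ≠ j → Q.IsOrtho (b i) (b j)) (i : Fin n)
    (Δ : Fin n → Bool) (l : List (Fin n)) :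
    CliffordAlgebra.map (auxPhi b hortho i)
        ((l.map fun j => if Δ j then ι Q (b j) else 1).prod) =
      ((l.map fun j => if Δ j ∧ j = i then (-1 : R) else 1).prod) •
        (l.map fun j => if Δ j then ι Q (b j) else 1).prod := by
  rw [← aux_smul_list_prod, map_list_prod, List.map_map]
  refine congrArg List.prod (List.map_congr_left fun j _ => ?_)
  simp only [Function.comp_apply]
  rcases hj : Δ j with _ | _
  · simp [hj]
  · simp only [hj, if_true, true_and, map_apply_ι, auxPhi_apply_b]
    rcases eq_or_ne j i with rfl | h
    · simp
    · simp [h]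

end aux3

set_option linter.unusedSectionVars false

section aux4
variable {R M : Type*} [CommRing R] [Invertible (2 : R)] [AddCommGroup M] [Module R M]
variable {Q : QuadraticForm R M} {n : ℕ}

open CliffordAlgebra

variable (b : Basis (Fin n) R M)
    (hortho : ∀ i j : Fin n, i ≠ j → Q.IsOrtho (b i) (b j))
    (B : Basis (Fin n → Bool) R (CliffordAlgebra Q))
    (hB : ∀ Δ : Fin n → Bool,
      B Δ = ((List.finRange n).map
        (fun i => if Δ i then CliffordAlgebra.ι Q (b i) else 1)).prod)

include hortho hB

/-- the diagonal value -/
noncomputable def auxD (Q : QuadraticForm R M) (b : Fin n → M) (Δ : Fin n → Bool) : R :=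
  ((List.finRange n).map fun i => if Δ i then Q (b i) else 1).prod

lemma aux_eps (i : Fin n) (Δ : Fin n → Bool) :
    CliffordAlgebra.map (auxPhi b hortho i) (B Δ) =
      (if Δ i then (-1 : R) else 1) • B Δ := by
  rw [hB Δ, aux_sign]
  congr 1
  rw [← Fin.prod_univ_def, Finset.prod_eq_single i (fun j _ hj => by simp [hj]) (by simp)]
  simp

lemma aux_eps_rev (i : Fin n) (Δ : Fin n → Bool) :
    CliffordAlgebra.map (auxPhi b hortho i) (reverse (B Δ)) =
      (if Δ i then (-1 : R) else 1) • reverse (B Δ) := by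
  rw [hB Δ, aux_rev_prod, aux_sign]
  congr 1
  rw [List.map_reverse, List.prod_reverse, ← Fin.prod_univ_def,
    Finset.prod_eq_single i (fun j _ hj => by simp [hj]) (by simp)]
  simp

lemma aux_T_Phi (i : Fin n) (x : CliffordAlgebra Q) :
    B.repr (CliffordAlgebra.map (auxPhi b hortho i) x) (fun _ => false) =
      B.repr x (fun _ => false) := by
  have h : (Finsupp.lapply (R := R) (fun _ : Fin n => false)) ∘ₗ B.repr.toLinearMap ∘ₗ
        (CliffordAlgebra.map (auxPhi b hortho i)).toLinearMap =
      (Finsupp.lapply (fun _ : Fin n => false)) ∘ₗ B.repr.toLinearMap := by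
    refine B.ext fun Δ => ?_
    simp only [LinearMap.comp_apply, AlgHom.toLinearMap_apply, LinearEquiv.coe_toLinearMap,
      Finsupp.lapply_apply, aux_eps b hortho B hB, map_smul, Basis.repr_self,
      Finsupp.smul_apply, Finsupp.single_apply]
    rcases eq_or_ne Δ (fun _ => false) with rfl | hΔ
    · simp
    · simp [hΔ]
  exact LinearMap.congr_fun h x

lemma aux_offdiag {Δ Γ : Fin n → Bool} (h : Δ ≠ Γ) :
    B.repr (reverse (B Δ) * B Γ) (fun _ => false) = 0 := by
  obtain ⟨i, hi⟩ : ∃ i, Δ i ≠ Γ i := by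
    by_contra hc
    push_neg at hc
    exact h (funext hc)
  set z := reverse (B Δ) * B Γ with hz
  have h2 : CliffordAlgebra.map (auxPhi b hortho i) z = -z := by
    rw [hz, map_mul, aux_eps_rev b hortho B hB, aux_eps b hortho B hB,
      smul_mul_smul_comm]
    rcases hΔ : Δ i with _|_ <;> rcases hΓ : Γ i with _|_ <;>
      simp_all
  have h3 := aux_T_Phi b hortho B hB i z
  rw [h2, map_neg, Finsupp.neg_apply] at h3
  have h4 : (2 : R) * B.repr z (fun _ => false) = 0 := by linear_combination - h3
  calc B.repr z (fun _ => false) = ⅟(2:R) * ((2:R) * B.repr z (fun _ => false)) := by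
        rw [← mul_assoc, invOf_mul_self, one_mul]
    _ = 0 := by rw [h4, mul_zero]

lemma aux_B_false : B (fun _ => false) = 1 := by
  rw [hB]
  refine List.prod_eq_one fun x hx => ?_
  simp only [List.mem_map] at hx
  obtain ⟨i, -, rfl⟩ := hx
  simp

lemma aux_diag (Δ : Fin n → Bool) :
    B.repr (reverse (B Δ) * B Δ) (fun _ => false) = auxD Q b Δ := by
  rw [hB Δ, aux_rev_prod, aux_telescope, Algebra.algebraMap_eq_smul_one,
    ← aux_B_false b hortho B hB, map_smul, Basis.repr_self]
  simp [auxD]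

lemma aux_dunit (hnd : Function.Bijective (QuadraticMap.polarBilin Q)) (Δ : Fin n → Bool) :
    IsUnit (auxD Q b Δ) := by
  refine List.prod_isUnit fun m hm => ?_
  simp only [List.mem_map] at hm
  obtain ⟨i, -, rfl⟩ := hm
  split
  · exact aux_Qb_unit b hortho hnd i
  · exact isUnit_one

lemma aux_key1 (x : CliffordAlgebra Q) (Γ : Fin n → Bool) :
    B.repr (reverse x * B Γ) (fun _ => false) = B.repr x Γ * auxD Q b Γ := by
  have h : (Finsupp.lapply (R := R) (fun _ : Fin n => false)) ∘ₗ B.repr.toLinearMap ∘ₗ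
        (LinearMap.mulRight R (B Γ)) ∘ₗ reverse (Q := Q) =
      auxD Q b Γ • ((Finsupp.lapply Γ) ∘ₗ B.repr.toLinearMap) := by
    refine B.ext fun Δ => ?_
    simp only [LinearMap.comp_apply, LinearEquiv.coe_toLinearMap, Finsupp.lapply_apply,
      LinearMap.mulRight_apply, LinearMap.smul_apply, Basis.repr_self, smul_eq_mul,
      Finsupp.single_apply]
    rcases eq_or_ne Δ Γ with rfl | hΔ
    · rw [aux_diag b hortho B hB]
      simp
    · rw [aux_offdiag b hortho B hB hΔ, if_neg hΔ, mul_zero]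
  have := LinearMap.congr_fun h x
  simpa [mul_comm] using this

lemma aux_key2 (x : CliffordAlgebra Q) (Γ : Fin n → Bool) :
    B.repr (reverse (B Γ) * x) (fun _ => false) = B.repr x Γ * auxD Q b Γ := by
  have h : (Finsupp.lapply (R := R) (fun _ : Fin n => false)) ∘ₗ B.repr.toLinearMap ∘ₗ
        (LinearMap.mulLeft R (reverse (B Γ))) =
      auxD Q b Γ • ((Finsupp.lapply Γ) ∘ₗ B.repr.toLinearMap) := by
    refine B.ext fun Δ => ?_
    simp only [LinearMap.comp_apply, LinearEquiv.coe_toLinearMap, Finsupp.lapply_apply,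
      LinearMap.mulLeft_apply, LinearMap.smul_apply, Basis.repr_self, smul_eq_mul,
      Finsupp.single_apply]
    rcases eq_or_ne Δ Γ with rfl | hΔ
    · rw [aux_diag b hortho B hB]
      simp
    · rw [aux_offdiag b hortho B hB (Ne.symm hΔ), if_neg hΔ, mul_zero]
  have := LinearMap.congr_fun h x
  simpa [mul_comm] using this

end aux4

/-- The bilinear form `B(x,y) = tr (σ(x) * y)` on the Clifford algebra `C(q)`, where `σ` is
the canonical involution (`reverse`) and `tr` the trace form (coefficient of `1` with respect
to the standard basis), is symmetric and non-degenerate, provided `1/2 ∈ k` and `(P,q)` is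
non-degenerate. -/
theorem stmt_3 {R M : Type*} [CommRing R] [Invertible (2 : R)]
    [AddCommGroup M] [Module R M]
    (n : ℕ) (Q : QuadraticForm R M) (b : Module.Basis (Fin n) R M)
    (hortho : ∀ i j : Fin n, i ≠ j → Q.IsOrtho (b i) (b j))
    (hnd : Function.Bijective (QuadraticMap.polarBilin Q))
    (B : Module.Basis (Fin n → Bool) R (CliffordAlgebra Q))
    (hB : ∀ Δ : Fin n → Bool,
      B Δ = ((List.finRange n).map
        (fun i => if Δ i then CliffordAlgebra.ι Q (b i) else 1)).prod)
    (tr : CliffordAlgebra Q → R)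
    (htr : ∀ x : CliffordAlgebra Q, tr x = B.repr x (fun _ => false)) :
    (∀ x y : CliffordAlgebra Q,
        tr (CliffordAlgebra.reverse x * y) = tr (CliffordAlgebra.reverse y * x)) ∧
    (∀ x : CliffordAlgebra Q,
        (∀ y : CliffordAlgebra Q, tr (CliffordAlgebra.reverse x * y) = 0) → x = 0) := by
  constructor
  · intro x y
    rw [htr, htr]
    have h : (Finsupp.lapply (R := R) (fun _ : Fin n => false)) ∘ₗ B.repr.toLinearMap ∘ₗ
          (LinearMap.mulLeft R (CliffordAlgebra.reverse x)) =
        (Finsupp.lapply (R := R) (fun _ : Fin n => false)) ∘ₗ B.repr.toLinearMap ∘ₗ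
          (LinearMap.mulRight R x) ∘ₗ CliffordAlgebra.reverse (Q := Q) := by
      refine B.ext fun Γ => ?_
      simp only [LinearMap.comp_apply, LinearEquiv.coe_toLinearMap, Finsupp.lapply_apply,
        LinearMap.mulLeft_apply, LinearMap.mulRight_apply]
      rw [aux_key1 b hortho B hB x Γ, aux_key2 b hortho B hB x Γ]
    simpa using LinearMap.congr_fun h y
  · intro x hx
    refine B.ext_elem_iff.mpr fun Γ => ?_
    have h1 := hx (B Γ)
    rw [htr, aux_key1 b hortho B hB x Γ] at h1
    obtain ⟨u, hu⟩ := aux_dunit b hortho B hB hnd Γ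
    rw [map_zero, Finsupp.zero_apply, ← Units.mul_inv_cancel_right (B.repr x Γ) u, hu, h1,
      zero_mul]
end

section
/- The map ϑ: C(q) → Hom_k(C(q)^op, k) defined by ϑ(x)(y^op) = B(x,y) = tr(σ(x)y) is an isomorphism of right C(q)-modules (where Hom_k(C(q)^op, k) carries the right C(q)-module structure induced by the involution), and satisfies ϑ^∨ ∘ can = ϑ, where can: C(q) → C(q)^{**} is the double-dual identification. Moreover ϑ preserves the ℤ/2-grading. -/
namespace Stmt4Aux

open CliffordAlgebra

variable {R M : Type*} [CommRing R] [Invertible (2 : R)]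
  [AddCommGroup M] [Module R M] {n : ℕ} (Q : QuadraticForm R M) (b : Module.Basis (Fin n) R M)

/-- Product of generators indicated by a boolean function, along a list of indices. -/
noncomputable def F (L : List (Fin n)) (Δ : Fin n → Bool) : CliffordAlgebra Q :=
  (L.map (fun i => if Δ i then ι Q (b i) else 1)).prod

lemma F_cons (i : Fin n) (L : List (Fin n)) (Δ : Fin n → Bool) :
    F Q b (i :: L) Δ = (if Δ i then ι Q (b i) else 1) * F Q b L Δ := by
  simp [F]

lemma F_congr {L : List (Fin n)} {Δ Δ' : Fin n → Bool} (h : ∀ i ∈ L, Δ i = Δ' i) :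
    F Q b L Δ = F Q b L Δ' := by
  unfold F
  congr 1
  exact List.map_congr_left fun i hi => by rw [h i hi]

lemma F_false (L : List (Fin n)) : F Q b L (fun _ => false) = 1 := by
  induction L with
  | nil => rfl
  | cons i L ih => rw [F_cons, ih]; simp

lemma F_eq_prod (L : List (Fin n)) (Δ : Fin n → Bool) :
    F Q b L Δ = ((L.filter (fun i => Δ i)).map (fun i => ι Q (b i))).prod := by
  induction L with
  | nil => rfl
  | cons i L ih =>
    rw [F_cons, ih]
    by_cases h : Δ i
    · simp [h, List.filter_cons]
    · simp [h, List.filter_cons]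

lemma count_filter_finRange (p : Fin n → Bool) (i : Fin n) :
    List.count i ((List.finRange n).filter p) = if p i then 1 else 0 := by
  by_cases h : p i
  · rw [if_pos h, List.count_filter (by simpa using h),
      List.count_eq_one_of_mem (List.nodup_finRange n) (List.mem_finRange i)]
  · rw [if_neg h, List.count_eq_zero]
    intro hmem
    exact h (by simpa using List.of_mem_filter hmem)

lemma key (hortho : ∀ i j : Fin n, i ≠ j → Q.IsOrtho (b i) (b j))
    (hq : ∀ i, IsUnit (Q (b i))) :
    ∀ L : List (Fin n), L.Nodup → ∀ j, j ∈ L → ∀ Δ : Fin n → Bool,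
      ∃ c : R, IsUnit c ∧
        ι Q (b j) * F Q b L Δ = c • F Q b L (Function.update Δ j (!Δ j)) := by
  intro L
  induction L with
  | nil => intro _ j hj; simp at hj
  | cons i L ih =>
    intro hnd j hj Δ
    rw [List.nodup_cons] at hnd
    rcases List.mem_cons.mp hj with hji | hjL
    · subst hji
      have hL : F Q b L (Function.update Δ j (!Δ j)) = F Q b L Δ :=
        F_congr Q b fun k hk =>
          Function.update_of_ne (fun h : k = j => hnd.1 (h ▸ hk)) _ _
      cases hΔ : Δ j with
      | false =>
        refine ⟨1, isUnit_one, ?_⟩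
        rw [hΔ] at hL
        rw [F_cons, F_cons, hL, one_smul]
        simp [hΔ, Function.update_self]
      | true =>
        refine ⟨Q (b j), hq j, ?_⟩
        rw [hΔ] at hL
        rw [F_cons, F_cons, hL, if_pos hΔ, if_neg (by simp), one_mul,
          ← mul_assoc, ι_sq_scalar, ← Algebra.smul_def]
    · have hij : i ≠ j := fun h => hnd.1 (h ▸ hjL)
      obtain ⟨c, hc, hmul⟩ := ih hnd.2 j hjL Δ
      have hup : Function.update Δ j (!Δ j) i = Δ i :=
        Function.update_of_ne hij _ _
      cases hΔi : Δ i with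
      | false =>
        refine ⟨c, hc, ?_⟩
        rw [F_cons, F_cons, if_neg (by simp [hΔi]), if_neg (by simp [hup, hΔi]),
          one_mul, one_mul]
        exact hmul
      | true =>
        refine ⟨-c, hc.neg, ?_⟩
        rw [F_cons, F_cons, if_pos hΔi, if_pos (hup.trans hΔi)]
        rw [← mul_assoc, ι_mul_ι_comm_of_isOrtho (hortho j i (Ne.symm hij)),
          neg_mul, mul_assoc, hmul, mul_smul_comm, ← neg_smul]

lemma main (hortho : ∀ i j : Fin n, i ≠ j → Q.IsOrtho (b i) (b j))
    (hq : ∀ i, IsUnit (Q (b i))) :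
    ∀ L : List (Fin n), ∃ c : R, IsUnit c ∧
      (L.map (fun i => ι Q (b i))).prod
        = c • F Q b (List.finRange n) (fun i => Nat.bodd (L.count i)) := by
  intro L
  induction L with
  | nil =>
    refine ⟨1, isUnit_one, ?_⟩
    have h : (fun i : Fin n => Nat.bodd (List.count i ([] : List (Fin n))))
        = fun _ => false := by
      funext i; simp
    rw [h, F_false, one_smul, List.map_nil, List.prod_nil]
  | cons j L ih =>
    obtain ⟨c, hc, hprod⟩ := ih
    obtain ⟨c', hc', hkey⟩ := key Q b hortho hq (List.finRange n)
      (List.nodup_finRange n) j (List.mem_finRange j) (fun i => Nat.bodd (L.count i))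
    refine ⟨c * c', hc.mul hc', ?_⟩
    have hfun : Function.update (fun i => Nat.bodd (L.count i)) j (!Nat.bodd (L.count j))
        = fun i => Nat.bodd (List.count i (j :: L)) := by
      funext i
      by_cases h : i = j
      · subst h; rw [Function.update_self, List.count_cons_self, Nat.bodd_succ]
      · rw [Function.update_of_ne h, List.count_cons_of_ne (Ne.symm h)]
    rw [List.map_cons, List.prod_cons, hprod, mul_smul_comm, hkey, hfun, smul_smul]

lemma isUnit_Q (hortho : ∀ i j : Fin n, i ≠ j → Q.IsOrtho (b i) (b j))
    (hnd : Function.Bijective (QuadraticMap.polarBilin Q)) (j : Fin n) :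
    IsUnit (Q (b j)) := by
  obtain ⟨x, hx⟩ := hnd.2 (b.coord j)
  have h1 : (1 : R) = b.repr x j * (Q (b j) + Q (b j)) := by
    calc (1 : R) = QuadraticMap.polarBilin Q x (b j) := by
          rw [hx]; simp [Module.Basis.coord_apply, Module.Basis.repr_self]
      _ = ∑ i, b.repr x i • QuadraticMap.polarBilin Q (b i) (b j) := by
          conv_lhs => rw [← b.sum_repr x]
          rw [map_sum, LinearMap.sum_apply]
          simp
      _ = b.repr x j • QuadraticMap.polarBilin Q (b j) (b j) := by
          refine Finset.sum_eq_single_of_mem j (Finset.mem_univ j) fun i _ hij => ?_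
          rw [QuadraticMap.polarBilin_apply_apply, (hortho i j hij).polar_eq_zero, smul_zero]
      _ = b.repr x j * (Q (b j) + Q (b j)) := by
          rw [QuadraticMap.polarBilin_apply_apply, QuadraticMap.polar_self, smul_eq_mul,
            two_smul]
  exact IsUnit.of_mul_eq_one (b.repr x j * 2) (by linear_combination -h1)

end Stmt4Aux

open CliffordAlgebra Stmt4Aux in
/-- The map `ϑ : C(q) → Hom_k(C(q)ᵒᵖ, k)`, `ϑ(x)(yᵒᵖ) = B(x,y) = tr (σ(x) y)`, is a
`k`-linear isomorphism onto the dual which is a right `C(q)`-module map for the module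
structure induced by the canonical involution (`ϑ(x·a)(y) = ϑ(x)(y·σ(a))`), satisfies
`ϑ^∨ ∘ can = ϑ` (i.e. the associated bilinear form is symmetric), and preserves the
`ℤ/2`-grading (components of different parity pair to zero). -/
theorem stmt_4 {R M : Type*} [CommRing R] [Invertible (2 : R)]
    [AddCommGroup M] [Module R M]
    (n : ℕ) (Q : QuadraticForm R M) (b : Module.Basis (Fin n) R M)
    (hortho : ∀ i j : Fin n, i ≠ j → Q.IsOrtho (b i) (b j))
    (hnd : Function.Bijective (QuadraticMap.polarBilin Q))
    (B : Module.Basis (Fin n → Bool) R (CliffordAlgebra Q))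
    (hB : ∀ Δ : Fin n → Bool,
      B Δ = ((List.finRange n).map
        (fun i => if Δ i then CliffordAlgebra.ι Q (b i) else 1)).prod)
    (tr : CliffordAlgebra Q → R)
    (htr : ∀ x : CliffordAlgebra Q, tr x = B.repr x (fun _ => false)) :
    ∃ ϑ : CliffordAlgebra Q ≃ₗ[R] Module.Dual R (CliffordAlgebra Q),
      (∀ x y : CliffordAlgebra Q, ϑ x y = tr (CliffordAlgebra.reverse x * y)) ∧
      (∀ x a y : CliffordAlgebra Q, ϑ (x * a) y = ϑ x (y * CliffordAlgebra.reverse a)) ∧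
      (∀ x y : CliffordAlgebra Q, ϑ x y = ϑ y x) ∧
      (∀ (i j : ZMod 2) (x y : CliffordAlgebra Q),
        x ∈ CliffordAlgebra.evenOdd Q i → y ∈ CliffordAlgebra.evenOdd Q j → i ≠ j →
          ϑ x y = 0) := by
  classical
  have hq : ∀ i, IsUnit (Q (b i)) := isUnit_Q Q b hortho hnd
  set trc : CliffordAlgebra Q →ₗ[R] R := B.coord (fun _ => false) with htrc_def
  have htrc : ∀ x, tr x = trc x := fun x => htr x
  have hBF : ∀ Δ, B Δ = F Q b (List.finRange n) Δ := hB
  have htrcB : ∀ Ξ, trc (B Ξ) = if Ξ = (fun _ => false) then 1 else 0 := by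
    intro Ξ
    simp [htrc_def, Module.Basis.coord_apply, Module.Basis.repr_self, Finsupp.single_apply]
  -- product of two basis elements
  have hprod : ∀ Δ Γ : Fin n → Bool, ∃ c : R, IsUnit c ∧
      B Δ * B Γ = c • B (fun i => xor (Δ i) (Γ i)) := by
    intro Δ Γ
    obtain ⟨c, hc, hm⟩ := main Q b hortho hq
      (((List.finRange n).filter (fun i => Δ i)) ++ ((List.finRange n).filter (fun i => Γ i)))
    refine ⟨c, hc, ?_⟩
    have hfun : (fun i => Nat.bodd (List.count i
        (((List.finRange n).filter (fun i => Δ i)) ++ ((List.finRange n).filter (fun i => Γ i)))))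
        = fun i => xor (Δ i) (Γ i) := by
      funext i
      rw [List.count_append, count_filter_finRange, count_filter_finRange]
      cases hΔ : Δ i <;> cases hΓ : Γ i <;> simp [hΔ, hΓ]
    rw [hBF Δ, hBF Γ, F_eq_prod, F_eq_prod, ← List.prod_append, ← List.map_append, hm,
      hfun, hBF]
  -- reverse of a basis element
  have hrev : ∀ Δ, ∃ c : R, IsUnit c ∧ reverse (B Δ) = c • B Δ := by
    intro Δ
    set L := (List.finRange n).filter (fun i => Δ i) with hL
    obtain ⟨c, hc, hm⟩ := main Q b hortho hq L.reverse
    refine ⟨c, hc, ?_⟩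
    have h1 : B Δ = ((L.map b).map (ι Q)).prod := by
      rw [hBF, F_eq_prod, List.map_map]; rfl
    have hfun : (fun i => Nat.bodd (List.count i L.reverse)) = Δ := by
      funext i
      rw [List.count_reverse, hL, count_filter_finRange]
      cases h : Δ i <;> simp [h]
    have h2 : reverse (B Δ) = ((L.reverse.map fun i => ι Q (b i))).prod := by
      rw [h1, reverse_prod_map_ι]
      simp [List.map_map, Function.comp_def]
    rw [h2, hm, hfun, ← hBF]
  -- off-diagonal traces vanish
  have hoff : ∀ Δ Γ, Δ ≠ Γ → trc (B Δ * B Γ) = 0 := by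
    intro Δ Γ hne
    obtain ⟨c, hc, hm⟩ := hprod Δ Γ
    rw [hm, map_smul, smul_eq_mul, htrcB, if_neg, mul_zero]
    intro h
    apply hne
    funext i
    have h2 := congrFun h i
    cases h1 : Δ i <;> cases h3 : Γ i <;> simp_all
  -- the bilinear trace form
  set mulB : CliffordAlgebra Q →ₗ[R] CliffordAlgebra Q →ₗ[R] R :=
    (LinearMap.mul R (CliffordAlgebra Q)).compr₂ trc with hmulB_def
  have hmulB : ∀ x y, mulB x y = trc (x * y) := fun x y => rfl
  set θ₀ : CliffordAlgebra Q →ₗ[R] Module.Dual R (CliffordAlgebra Q) :=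
    mulB.comp (reverse (Q := Q)) with hθ₀_def
  have hθ₀ : ∀ x y, θ₀ x y = trc (reverse x * y) := fun x y => rfl
  -- trace property
  have htrace : ∀ x y, trc (x * y) = trc (y * x) := by
    have h : mulB = mulB.flip := by
      refine LinearMap.ext_basis B B fun Δ Γ => ?_
      simp only [LinearMap.flip_apply, hmulB]
      rcases eq_or_ne Δ Γ with h | h
      · rw [h]
      · rw [hoff Δ Γ h, hoff Γ Δ h.symm]
    intro x y
    have h2 := LinearMap.congr_fun (LinearMap.congr_fun h x) y
    simpa only [LinearMap.flip_apply, hmulB] using h2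
  -- symmetry
  have hsymm : ∀ x y, trc (reverse x * y) = trc (reverse y * x) := by
    have h : θ₀ = θ₀.flip := by
      refine LinearMap.ext_basis B B fun Δ Γ => ?_
      simp only [LinearMap.flip_apply, hθ₀]
      rcases eq_or_ne Δ Γ with h | h
      · rw [h]
      · obtain ⟨c, hc, hm⟩ := hrev Δ
        obtain ⟨c', hc', hm'⟩ := hrev Γ
        rw [hm, hm', smul_mul_assoc, smul_mul_assoc, map_smul, map_smul,
          hoff Δ Γ h, hoff Γ Δ h.symm, smul_zero, smul_zero]
    intro x y
    have h2 := LinearMap.congr_fun (LinearMap.congr_fun h x) y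
    simpa only [LinearMap.flip_apply, hθ₀] using h2
  -- trace vanishes on odd part
  have hinv : trc.comp (involute (Q := Q)).toLinearMap = trc := by
    refine B.ext fun Δ => ?_
    simp only [LinearMap.comp_apply, AlgHom.toLinearMap_apply]
    set L := (List.finRange n).filter (fun i => Δ i) with hL
    have h1 : B Δ = ((L.map b).map (ι Q)).prod := by
      rw [hBF, F_eq_prod, List.map_map]; rfl
    rw [h1, involute_prod_map_ι, map_smul, smul_eq_mul, ← h1]
    rcases eq_or_ne Δ (fun _ => false) with h | h
    · have hLnil : L = [] := by
        subst h; simp [hL]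
      rw [hLnil]
      simp
    · rw [htrcB, if_neg h, mul_zero]
  have hodd : ∀ z ∈ evenOdd Q 1, trc z = 0 := by
    intro z hz
    have h1 : trc (involute z) = trc z := LinearMap.congr_fun hinv z
    rw [involute_eq_of_mem_odd hz, map_neg] at h1
    have h2 : (2 : R) * trc z = 0 := by linear_combination -h1
    calc trc z = ⅟(2 : R) * ((2 : R) * trc z) := by
          rw [← mul_assoc, invOf_mul_self, one_mul]
      _ = 0 := by rw [h2, mul_zero]
  -- θ₀ maps the basis to a (rescaled) dual basis
  have hex : ∀ Δ, ∃ u : Rˣ, θ₀ (B Δ) = (u : R) • B.coord Δ := by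
    intro Δ
    obtain ⟨c, hc, hm⟩ := hrev Δ
    obtain ⟨c', hc', hm'⟩ := hprod Δ Δ
    have hxor : (fun i => xor (Δ i) (Δ i)) = fun _ => false := by funext i; simp
    refine ⟨hc.unit * hc'.unit, ?_⟩
    refine B.ext fun Γ => ?_
    rw [hθ₀]
    rcases eq_or_ne Γ Δ with h | h
    · subst h
      rw [hm, smul_mul_assoc, map_smul, hm', map_smul, hxor, htrcB, if_pos rfl]
      simp [Module.Basis.coord_apply, Module.Basis.repr_self, IsUnit.unit_spec]
    · rw [hm, smul_mul_assoc, map_smul, hoff Δ Γ (Ne.symm h), smul_zero]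
      simp [Module.Basis.coord_apply, Module.Basis.repr_self, Finsupp.single_apply, h]
  choose u hu using hex
  set Bd : Module.Basis (Fin n → Bool) R (Module.Dual R (CliffordAlgebra Q)) :=
    B.dualBasis.unitsSMul u with hBd
  have hθB : ∀ Δ, θ₀ (B Δ) = Bd Δ := by
    intro Δ
    rw [hu, hBd, Module.Basis.unitsSMul_apply, Units.smul_def]
    congr 1
    exact (congrFun B.coe_dualBasis Δ).symm
  have hbij : Function.Bijective θ₀ := by
    have he : θ₀ = (B.equiv Bd (Equiv.refl _)).toLinearMap := by
      refine B.ext fun Δ => ?_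
      rw [hθB, LinearEquiv.coe_coe, Module.Basis.equiv_apply, Equiv.refl_apply]
    rw [he]
    exact (B.equiv Bd (Equiv.refl _)).bijective
  refine ⟨LinearEquiv.ofBijective θ₀ hbij, ?_, ?_, ?_, ?_⟩
  · intro x y
    rw [LinearEquiv.ofBijective_apply, hθ₀, htrc]
  · intro x a y
    rw [LinearEquiv.ofBijective_apply, LinearEquiv.ofBijective_apply, hθ₀, hθ₀,
      reverse.map_mul, mul_assoc, htrace, mul_assoc]
  · intro x y
    rw [LinearEquiv.ofBijective_apply, LinearEquiv.ofBijective_apply, hθ₀, hθ₀]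
    exact hsymm x y
  · intro i j x y hx hy hij
    rw [LinearEquiv.ofBijective_apply, hθ₀]
    have hxy : reverse x * y ∈ evenOdd Q (i + j) :=
      SetLike.mul_mem_graded ((reverse_mem_evenOdd_iff Q).mpr hx) hy
    have h1 : i + j = 1 := by
      have : ∀ i j : ZMod 2, i ≠ j → i + j = 1 := by decide
      exact this i j hij
    rw [h1] at hxy
    exact hodd _ hxy
end

section
/- For a quadratic form q = ⟨a₁,…,aₙ⟩ over a field k of characteristic ≠ 2 with orthogonal basis e₁,…,eₙ, the restriction of the trace form of the Clifford algebra to the even part C₀(q) is isometric (in the Witt group W(k)) to the Pfister form ⟨⟨a₁a₂,…,a₁aₙ⟩⟩ = ⟨1,a₁a₂⟩⊗···⊗⟨1,a₁aₙ⟩; that is, the diagonal form ⊥_{Δ∈Ω} ⟨q(e^Δ)⟩ over all even multi-indices Δ equals ⟨⟨a₁a₂,…,a₁aₙ⟩⟩ in W(k), where q(e^Δ) = a₁^{b₁}···aₙ^{bₙ}. -/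
private lemma card_filter_cons {n : ℕ} (b : Bool) (S : Fin n → Bool) :
    (Finset.univ.filter fun i => (Fin.cons b S : Fin (n+1) → Bool) i = true).card
      = (if b then 1 else 0) + (Finset.univ.filter fun j => S j = true).card := by
  rw [Finset.card_filter, Finset.card_filter, Fin.sum_univ_succ, Fin.cons_zero]
  simp [Fin.cons_succ]

/-- For a diagonal quadratic form `⟨a₁,…,aₙ⟩` (here with `n+1` entries `a 0, …, a n`) over a
field `k` of characteristic `≠ 2`, the restriction of the trace form of the Clifford algebra
to the even part, namely the diagonal form `⊥_{Δ ∈ Ω} ⟨q(e^Δ)⟩` over the even multi-indices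
`Δ` with `q(e^Δ) = a₁^{b₁} ⋯ aₙ^{bₙ}`, is isometric to the Pfister form
`⟨⟨a₁a₂, …, a₁aₙ⟩⟩ = ⟨1, a₁a₂⟩ ⊗ ⋯ ⊗ ⟨1, a₁aₙ⟩` (indexed by subsets of `{2,…,n}`). -/
theorem stmt_5 {k : Type*} [Field k] (h2 : (2 : k) ≠ 0) (n : ℕ)
    (a : Fin (n + 1) → k) (ha : ∀ i, a i ≠ 0) :
    QuadraticMap.Equivalent
      (QuadraticMap.weightedSumSquares k
        (fun Δ : {Δ : Fin (n + 1) → Bool // Even (Finset.univ.filter fun i => Δ i).card} =>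
          ∏ i : Fin (n + 1), if Δ.1 i then a i else 1))
      (QuadraticMap.weightedSumSquares k
        (fun S : Fin n → Bool =>
          ∏ j : Fin n, if S j then a 0 * a j.succ else 1)) := by
  classical
  set w1 : {Δ : Fin (n + 1) → Bool // Even (Finset.univ.filter fun i => Δ i).card} → k :=
    fun Δ => ∏ i : Fin (n + 1), if Δ.1 i then a i else 1 with hw1
  set w2 : (Fin n → Bool) → k := fun S => ∏ j : Fin n, if S j then a 0 * a j.succ else 1 with hw2
  set m : (Fin n → Bool) → ℕ := fun S => (Finset.univ.filter fun j => S j = true).card with hm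
  have hcons : ∀ (S : Fin n → Bool),
      Even (Finset.univ.filter fun i =>
        Fin.cons (α := fun _ => Bool) (decide (Odd (m S))) S i = true).card := by
    intro S
    rw [card_filter_cons]
    rcases Nat.even_or_odd (m S) with h | h
    · have h' : ¬ Odd (m S) := Nat.not_odd_iff_even.mpr h
      simpa [h'] using h
    · have h' : (Finset.univ.filter fun j => S j = true).card % 2 = 1 := Nat.odd_iff.mp h
      rw [decide_eq_true h, if_pos rfl, Nat.even_iff]
      omega
  set e : {Δ : Fin (n + 1) → Bool // Even (Finset.univ.filter fun i => Δ i).card}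
      ≃ (Fin n → Bool) :=
    { toFun := fun Δ => fun j => Δ.1 j.succ
      invFun := fun S => ⟨Fin.cons (decide (Odd (m S))) S, hcons S⟩
      left_inv := by
        rintro ⟨Δ, hΔ⟩
        have hsum : (Finset.univ.filter fun i => Δ i = true).card
            = (if Δ 0 then 1 else 0) + (Finset.univ.filter fun j : Fin n => Δ j.succ = true).card := by
          rw [Finset.card_filter, Finset.card_filter, Fin.sum_univ_succ]
        rw [hsum] at hΔ
        have hb : decide (Odd (m (fun j : Fin n => Δ j.succ))) = Δ 0 := by
          have hmm : m (fun j : Fin n => Δ j.succ)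
              = (Finset.univ.filter fun j : Fin n => Δ j.succ = true).card := rfl
          cases hΔ0 : Δ 0
          · rw [hΔ0] at hΔ
            simp only [Bool.false_eq_true, if_false, zero_add, Nat.even_iff] at hΔ
            exact decide_eq_false (by rw [hmm, Nat.odd_iff]; omega)
          · rw [hΔ0] at hΔ
            simp only [if_true, Nat.even_iff] at hΔ
            exact decide_eq_true (by rw [hmm, Nat.odd_iff]; omega)
        ext i
        show Fin.cons (α := fun _ => Bool)
            (decide (Odd (m fun j => Δ j.succ))) (fun j => Δ j.succ) i = Δ i
        rw [hb]
        induction i using Fin.cases with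
        | zero => rw [Fin.cons_zero]
        | succ j => rw [Fin.cons_succ]
      right_inv := by
        intro S; funext j; simp [Fin.cons_succ] } with he
  set d : (Fin n → Bool) → k := fun S => (a 0 ^ (m S / 2))⁻¹ with hd
  have hd0 : ∀ S, d S ≠ 0 := fun S => inv_ne_zero (pow_ne_zero _ (ha 0))
  have key : ∀ S : Fin n → Bool, w2 S * (d S * d S) = w1 (e.symm S) := by
    intro S
    have hsplit : w2 S = a 0 ^ m S * ∏ j : Fin n, if S j then a j.succ else 1 := by
      rw [hw2]
      have : ∀ j : Fin n, (if S j then a 0 * a j.succ else 1)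
          = (if S j then a 0 else 1) * (if S j then a j.succ else 1) := by
        intro j; by_cases h : S j <;> simp [h]
      simp_rw [this, Finset.prod_mul_distrib]
      congr 1
      rw [← Finset.prod_filter, Finset.prod_const, hm]
    have hw1e : w1 (e.symm S)
        = (if Odd (m S) then a 0 else 1) * ∏ j : Fin n, if S j then a j.succ else 1 := by
      rw [hw1]
      show (∏ i : Fin (n + 1),
          if Fin.cons (α := fun _ => Bool) (decide (Odd (m S))) S i then a i else 1) = _
      rw [Fin.prod_univ_succ]
      simp [Fin.cons_succ]
    have hpow : a 0 ^ m S
        = (a 0 ^ (m S / 2)) * (a 0 ^ (m S / 2)) * (if Odd (m S) then a 0 else 1) := by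
      rcases Nat.even_or_odd (m S) with h | h
      · rw [if_neg (Nat.not_odd_iff_even.mpr h), mul_one, ← pow_add]
        congr 1
        have := Nat.even_iff.mp h
        omega
      · rw [if_pos h, ← pow_add, ← pow_succ]
        congr 1
        have := Nat.odd_iff.mp h
        omega
    have hdS : d S = (a 0 ^ (m S / 2))⁻¹ := rfl
    rw [hsplit, hw1e, hdS, hpow]
    have hAne : a 0 ^ (m S / 2) ≠ 0 := pow_ne_zero _ (ha 0)
    field_simp
  refine ⟨{ toFun := fun v S => d S * v (e.symm S)
            invFun := fun u Δ => (d (e Δ))⁻¹ * u (e Δ)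
            map_add' := by intro v v'; funext S; simp [mul_add]
            map_smul' := by intro c v; funext S; simp [smul_eq_mul]; ring
            left_inv := by
              intro v; funext Δ
              simp only [Equiv.symm_apply_apply]
              exact inv_mul_cancel_left₀ (hd0 _) _
            right_inv := by
              intro u; funext S
              simp only [Equiv.apply_symm_apply]
              exact mul_inv_cancel_left₀ (hd0 _) _
            map_app' := ?_ }⟩
  intro v
  simp only [QuadraticMap.weightedSumSquares_apply, smul_eq_mul]
  rw [← Equiv.sum_comp e.symm (fun Δ => w1 Δ * (v Δ * v Δ))]
  refine Finset.sum_congr rfl fun S _ => ?_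
  rw [← key S]
  ring
end
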